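/- Let H be a complex Hilbert space with orthonormal basis (b_v)_{v ∈ B}, let φ = Σ_v φ_v • b_v ∈ H, let c ∈ ℂ with c ≠ 0, and let (d_v)_{v ∈ B} be complex coefficients. If c • (φ ⊗ φ) = Σ_v d_v • (b_v ⊗ b_v) in H ⊗ H, then φ_u · φ_v = 0 for all u ≠ v; in particular, at most one coordinate φ_v is nonzero. -/
import Mathlib


open scoped ComplexInnerProductSpace

/-- **Coefficient-comparison lemma for the no-cloning proofs.**
Let `H` be a complex Hilbert space with orthonormal (Hilbert) basis `(b v)_{v ∈ B}`
and let `T2` be the Hilbert-space tensor product `H ⊗ H` (with pure tensors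
`tmul x y` multiplying inner products and spanning a dense subspace), so that
`(b u ⊗ b v)` is an orthonormal basis of `H ⊗ H`.  Let `φ = Σ_v φv v • b v ∈ H`,
let `c ≠ 0`, and suppose `c • (φ ⊗ φ) = Σ_v d v • (b v ⊗ b v)` in `H ⊗ H`.
Then `φv u * φv v = 0` for all `u ≠ v`; in particular at most one coordinate
`φv v` is nonzero. -/
theorem no_cloning_coefficient_comparison
    (H : Type*) [NormedAddCommGroup H] [InnerProductSpace ℂ H] [CompleteSpace H]
    {B : Type*} (b : HilbertBasis B ℂ H)
    (T2 : Type*) [NormedAddCommGroup T2] [InnerProductSpace ℂ T2] [CompleteSpace T2]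
    (tmul : H →ₗ[ℂ] H →ₗ[ℂ] T2)
    (htmul_inner : ∀ x y x' y' : H, ⟪tmul x y, tmul x' y'⟫ = ⟪x, x'⟫ * ⟪y, y'⟫)
    (htmul_dense :
      (Submodule.span ℂ (Set.range fun p : H × H => tmul p.1 p.2)).topologicalClosure
        = ⊤)
    (φ : H) (φv : B → ℂ) (hφ : HasSum (fun v => φv v • (b v : H)) φ)
    (c : ℂ) (hc : c ≠ 0) (d : B → ℂ)
    (hd : HasSum (fun v => d v • tmul (b v) (b v)) (c • tmul φ φ)) :
    (∀ u v : B, u ≠ v → φv u * φv v = 0) ∧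
      ∀ u v : B, φv u ≠ 0 → φv v ≠ 0 → u = v := by
  classical
  have hortho : ∀ i j : B, ⟪(b i : H), (b j : H)⟫ = if i = j then (1 : ℂ) else 0 :=
    fun i j => orthonormal_iff_ite.mp b.orthonormal i j
  -- coefficients of φ
  have hcoef : ∀ u : B, ⟪(b u : H), φ⟫ = φv u := by
    intro u
    have h1 : HasSum (fun v => ⟪(b u : H), φv v • (b v : H)⟫) ⟪(b u : H), φ⟫ :=
      (innerSL ℂ (b u : H)).hasSum hφ
    have h2 : (fun v => ⟪(b u : H), φv v • (b v : H)⟫)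
        = fun v => if v = u then φv u else 0 := by
      funext v
      rw [inner_smul_right, hortho]
      by_cases h : v = u
      · subst h; simp
      · rw [if_neg (fun h' => h h'.symm), if_neg h, mul_zero]
    rw [h2] at h1
    exact h1.unique (hasSum_ite_eq u (φv u))
  have key : ∀ u v : B, u ≠ v → φv u * φv v = 0 := by
    intro u v huv
    set T := tmul (b u) (b v)
    have h1 : HasSum (fun w => ⟪T, d w • tmul (b w) (b w)⟫) ⟪T, c • tmul φ φ⟫ :=
      (innerSL ℂ T).hasSum hd
    have h2 : (fun w => ⟪T, d w • tmul (b w) (b w)⟫) = fun _ => (0 : ℂ) := by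
      funext w
      rw [inner_smul_right, htmul_inner, hortho, hortho]
      by_cases h : u = w
      · rw [if_neg (fun h' : v = w => huv (h.trans h'.symm)), mul_zero, mul_zero]
      · rw [if_neg h, zero_mul, mul_zero]
    rw [h2] at h1
    have h3 : ⟪T, c • tmul φ φ⟫ = 0 := h1.unique hasSum_zero
    rw [inner_smul_right, htmul_inner, hcoef, hcoef] at h3
    rcases mul_eq_zero.mp h3 with h | h
    · exact absurd h hc
    · exact mul_eq_zero.mpr (mul_eq_zero.mp h)
  refine ⟨key, fun u v hu hv => ?_⟩
  by_contra h
  exact hu (by simpa [hv] using key u v h)
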